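/- Let (W, ω) be a 2n-dimensional complex symplectic vector space, J a diagonalizable operator with ω(Ju,v) = −ω(u,Jv), and L ⊆ W a Lagrangian subspace that is J-invariant with J acting on L with eigenvalues ν₁, ..., ν_n. Then the spectrum of J on W (with multiplicity) is {ν₁, ..., ν_n, −ν₁, ..., −ν_n}, and there exists a J-invariant Lagrangian complement V of L in W on which J has eigenvalues −ν₁, ..., −ν_n. -/

import Mathlib

open Module LinearMap

section helpers

variable {W : Type*} [AddCommGroup W] [Module ℂ W]
  (ω : LinearMap.BilinForm ℂ W) (J : Module.End ℂ W)

theorem omega_neg (halt : ∀ u : W, ω u u = 0) (x y : W) : ω x y = - ω y x := by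
  have h := halt (x + y)
  simp only [map_add, LinearMap.add_apply, halt x, halt y] at h
  linear_combination h

theorem pair_zero (hskew : ∀ u v : W, ω (J u) v + ω u (J v) = 0)
    {μ lam : ℂ} (h : μ + lam ≠ 0) {x y : W}
    (hx : x ∈ J.eigenspace μ) (hy : y ∈ J.eigenspace lam) : ω x y = 0 := by
  rw [Module.End.mem_eigenspace_iff] at hx hy
  have h1 := hskew x y
  rw [hx, hy, map_smul, LinearMap.smul_apply, map_smul] at h1
  have h2 : (μ + lam) * ω x y = 0 := by
    rw [add_mul]; simpa [smul_eq_mul] using h1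
  exact (mul_eq_zero.mp h2).resolve_left h

end helpers

theorem key (n : ℕ) : ∀ {W : Type*} [AddCommGroup W] [Module ℂ W] [FiniteDimensional ℂ W]
    (ω : LinearMap.BilinForm ℂ W) (halt : ∀ u : W, ω u u = 0) (hnondeg : ω.Nondegenerate)
    (J : Module.End ℂ W) (hskew : ∀ u v : W, ω (J u) v + ω u (J v) = 0)
    (hdiag : ⨆ μ : ℂ, J.eigenspace μ = ⊤)
    (ν : Fin n → ℂ) (b : Fin n → W) (_ : LinearIndependent ℂ b)
    (_ : ∀ i, J (b i) = ν i • b i) (_ : ∀ i j, ω (b i) (b j) = 0),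
    ∃ f : Fin n → W, (∀ i, J (f i) = (-ν i) • f i) ∧ (∀ i j, ω (f i) (f j) = 0) ∧
      (∀ i j, ω (b i) (f j) = if i = j then 1 else 0) := by
  induction n with
  | zero =>
    intro W _ _ _ ω _ _ J _ _ ν b _ _ _
    exact ⟨fun i => i.elim0, fun i => i.elim0, fun i => i.elim0, fun i => i.elim0⟩
  | succ m ih =>
    intro W _ _ _ ω halt hnondeg J hskew hdiag ν b hbind hb hbiso
    classical
    have hbmem : ∀ i, b i ∈ J.eigenspace (ν i) :=
      fun i => Module.End.mem_eigenspace_iff.mpr (hb i)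
    -- Step 1: find u with ω (b j) u = δ_{j0}
    set T := Submodule.span ℂ (Set.range b) with hT
    let bT : Basis (Fin (m + 1)) ℂ T := Basis.span hbind
    obtain ⟨C, hC⟩ := Submodule.exists_isCompl T
    set φ : W →ₗ[ℂ] ℂ := -((bT.coord 0).comp (T.linearProjOfIsCompl C hC)) with hφdef
    have hφ : ∀ j, φ (b j) = -(if j = 0 then 1 else 0) := by
      intro j
      have hmem : b j ∈ T := Submodule.subset_span (Set.mem_range_self j)
      have h1 : T.linearProjOfIsCompl C hC (b j) = ⟨b j, hmem⟩ :=
        Submodule.linearProjOfIsCompl_apply_left hC ⟨b j, hmem⟩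
      have h2 : (⟨b j, hmem⟩ : T) = bT j := (Basis.span_apply hbind j).symm
      simp only [hφdef, LinearMap.neg_apply, LinearMap.comp_apply, h1, h2, neg_inj]
      rw [Basis.coord_apply, Basis.repr_self_apply]
    set u : W := (ω.toDual hnondeg).symm φ with hu
    have hωu : ∀ x, ω u x = φ x := fun x =>
      LinearMap.BilinForm.apply_toDual_symm_apply (hB := hnondeg) φ x
    have hbu : ∀ j, ω (b j) u = if j = 0 then 1 else 0 := by
      intro j
      rw [omega_neg ω halt, hωu, hφ, neg_neg]
    -- Step 2: eigen-decomposition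
    have internal : DirectSum.IsInternal (fun μ : ℂ => J.eigenspace μ) :=
      DirectSum.isInternal_submodule_of_iSupIndep_of_iSup_eq_top
        (Module.End.eigenspaces_iSupIndep J) hdiag
    let dec := (LinearEquiv.ofBijective
      (DirectSum.coeLinearMap fun μ : ℂ => J.eigenspace μ) internal).symm
    let comp : W → ℂ → W := fun w μ => ((dec w) μ : W)
    have hcomp_mem : ∀ w μ, comp w μ ∈ J.eigenspace μ := fun w μ => ((dec w) μ).2
    have hsum : ∀ w : W, w = ∑ μ ∈ (dec w).support, comp w μ := by
      intro w
      have h1 : DirectSum.coeLinearMap (fun μ : ℂ => J.eigenspace μ) (dec w) = w :=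
        (LinearEquiv.ofBijective (DirectSum.coeLinearMap fun μ : ℂ => J.eigenspace μ) internal).apply_symm_apply w
      conv_lhs => rw [← h1, ← DirectSum.sum_support_of (dec w)]
      rw [map_sum]
      exact Finset.sum_congr rfl fun μ _ => DirectSum.coeLinearMap_of _ μ _
    have hproj : ∀ (μ : ℂ) (x : W), x ∈ J.eigenspace μ → ∀ w : W,
        ω x w = ω x (comp w (-μ)) := by
      intro μ x hx w
      conv_lhs => rw [hsum w, map_sum]
      refine Finset.sum_eq_single (-μ) ?_ ?_
      · intro lam _ hlam
        refine pair_zero ω J hskew ?_ hx (hcomp_mem w lam)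
        intro hc
        exact hlam (eq_neg_of_add_eq_zero_right hc)
      · intro hns
        have h0 : (dec w) (-μ) = 0 := DFinsupp.notMem_support_iff.mp hns
        have hc0 : comp w (-μ) = 0 := by
          show ((dec w) (-μ) : W) = 0
          rw [h0]; rfl
        rw [hc0, map_zero]
    -- Step 3: f0
    set f0 : W := comp u (-ν 0) with hf0
    have hf0mem : f0 ∈ J.eigenspace (-ν 0) := hcomp_mem u _
    have hbf0 : ∀ j, ω (b j) f0 = if j = 0 then 1 else 0 := by
      intro j
      by_cases h : ν j = ν 0
      · have := hproj (ν j) (b j) (hbmem j) u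
        rw [h] at this
        rw [← hf0] at this
        rw [← this, hbu]
      · have hj0 : j ≠ 0 := fun hj => h (by rw [hj])
        rw [if_neg hj0]
        refine pair_zero ω J hskew ?_ (hbmem j) hf0mem
        intro hc
        exact h (by linear_combination hc)
    -- Step 4: the symplectic complement
    set W' : Submodule ℂ W := LinearMap.ker (ω (b 0)) ⊓ LinearMap.ker (ω f0) with hW'
    have hmemW' : ∀ w : W, w ∈ W' ↔ ω (b 0) w = 0 ∧ ω f0 w = 0 := by
      intro w; simp [hW', Submodule.mem_inf, LinearMap.mem_ker]
    have hωb0f0 : ω (b 0) f0 = 1 := by rw [hbf0 0]; simp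
    have hωf0b0 : ω f0 (b 0) = -1 := by rw [omega_neg ω halt, hωb0f0]
    have hJW' : ∀ w ∈ W', J w ∈ W' := by
      intro w hw
      obtain ⟨h1, h2⟩ := (hmemW' w).mp hw
      refine (hmemW' _).mpr ⟨?_, ?_⟩
      · have h3 := hskew (b 0) w
        rw [hb 0, map_smul, LinearMap.smul_apply, h1] at h3
        simpa using h3
      · have h3 := hskew f0 w
        rw [Module.End.mem_eigenspace_iff.mp hf0mem, map_smul,
          LinearMap.smul_apply, h2] at h3
        simpa using h3
    set J' : Module.End ℂ W' := J.restrict hJW' with hJ'def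
    set ω' := ω.restrict W' with hω'def
    have hω'app : ∀ x y : W', ω' x y = ω (x : W) (y : W) := fun x y => rfl
    have hJ'coe : ∀ x : W', ((J' x : W)) = J (x : W) :=
      fun x => LinearMap.restrict_coe_apply J hJW' x
    have halt' : ∀ u : W', ω' u u = 0 := fun u => halt (u : W)
    have hskew' : ∀ u v : W', ω' (J' u) v + ω' u (J' v) = 0 := by
      intro u v
      rw [hω'app, hω'app, hJ'coe, hJ'coe]
      exact hskew _ _
    have hnd' : ω'.Nondegenerate := by
      suffices hsl : ω'.SeparatingLeft from ⟨hsl, fun y hy => hsl y fun x => by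
        have hyx := hy x; rw [hω'app] at hyx; rw [hω'app, omega_neg ω halt, hyx, neg_zero]⟩
      intro w hw
      have hww := (hmemW' (w : W)).mp w.2
      have h2 : ω (w : W) (b 0) = 0 := by rw [omega_neg ω halt, hww.1, neg_zero]
      have h3 : ω (w : W) f0 = 0 := by rw [omega_neg ω halt, hww.2, neg_zero]
      have hall : ∀ v : W, ω (w : W) v = 0 := by
        intro v
        have hv' : v + ω f0 v • b 0 - ω (b 0) v • f0 ∈ W' := by
          refine (hmemW' _).mpr ⟨?_, ?_⟩
          · simp only [map_add, map_sub, map_smul, smul_eq_mul]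
            rw [hbiso 0 0, hωb0f0]; ring
          · simp only [map_add, map_sub, map_smul, smul_eq_mul]
            rw [hωf0b0, halt f0]; ring
        have h1 := hw ⟨_, hv'⟩
        rw [hω'app] at h1
        simp only [map_add, map_sub, map_smul, smul_eq_mul, h2, h3] at h1
        simpa using h1
      exact Subtype.ext (hnondeg.1 _ hall)
    have hdiag' : ⨆ μ : ℂ, J'.eigenspace μ = ⊤ := by
      rw [eq_top_iff]
      rintro w -
      obtain ⟨h1, h2⟩ := (hmemW' (w : W)).mp w.2
      have hcW' : ∀ μ : ℂ, comp (w : W) μ ∈ W' := by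
        intro μ
        refine (hmemW' _).mpr ⟨?_, ?_⟩
        · by_cases h : μ = -ν 0
          · rw [h, ← hproj (ν 0) (b 0) (hbmem 0) (w : W)]; exact h1
          · exact pair_zero ω J hskew (fun hc => h (eq_neg_of_add_eq_zero_right hc))
              (hbmem 0) (hcomp_mem _ μ)
        · by_cases h : μ = ν 0
          · have h4 := hproj (-ν 0) f0 hf0mem (w : W)
            rw [neg_neg] at h4
            rw [h, ← h4]; exact h2
          · refine pair_zero ω J hskew ?_ hf0mem (hcomp_mem _ μ)
            intro hc; exact h (by linear_combination hc)
      have hwsum : w = ∑ μ ∈ (dec (w : W)).support, (⟨comp (w : W) μ, hcW' μ⟩ : W') := by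
        apply Subtype.ext
        push_cast
        exact hsum (w : W)
      rw [hwsum]
      refine Submodule.sum_mem _ ?_
      intro μ _
      refine Submodule.mem_iSup_of_mem μ ?_
      rw [Module.End.mem_eigenspace_iff]
      apply Subtype.ext
      rw [hJ'coe]
      simpa using Module.End.mem_eigenspace_iff.mp (hcomp_mem (w : W) μ)
    -- Step 5: apply the induction hypothesis
    have hbmem' : ∀ i : Fin m, b i.succ ∈ W' := by
      intro i
      refine (hmemW' _).mpr ⟨hbiso 0 i.succ, ?_⟩
      rw [omega_neg ω halt, hbf0 i.succ, if_neg (Fin.succ_ne_zero i), neg_zero]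
    set b' : Fin m → W' := fun i => ⟨b i.succ, hbmem' i⟩ with hb'def
    have hbind' : LinearIndependent ℂ b' :=
      LinearIndependent.of_comp W'.subtype (hbind.comp Fin.succ (Fin.succ_injective m))
    have hb' : ∀ i, J' (b' i) = (ν i.succ) • b' i := by
      intro i; apply Subtype.ext
      rw [hJ'coe]
      simpa using hb i.succ
    have hbiso' : ∀ i j, ω' (b' i) (b' j) = 0 := fun i j => hbiso i.succ j.succ
    obtain ⟨f', hf1, hf2, hf3⟩ := ih ω' halt' hnd' J' hskew' hdiag'
      (fun i => ν i.succ) b' hbind' hb' hbiso'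
    refine ⟨Fin.cases f0 (fun i => (f' i : W)), ?_, ?_, ?_⟩
    · intro i
      induction i using Fin.cases with
      | zero =>
        simp only [Fin.cases_zero]
        exact Module.End.mem_eigenspace_iff.mp hf0mem
      | succ i =>
        simp only [Fin.cases_succ]
        have hcoe := congrArg Subtype.val (hf1 i)
        rw [hJ'coe] at hcoe
        simpa using hcoe
    · intro i j
      induction i using Fin.cases with
      | zero =>
        induction j using Fin.cases with
        | zero => simpa using halt f0
        | succ j =>
          simp only [Fin.cases_zero, Fin.cases_succ]
          exact ((hmemW' _).mp (f' j).2).2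
      | succ i =>
        induction j using Fin.cases with
        | zero =>
          simp only [Fin.cases_zero, Fin.cases_succ]
          rw [omega_neg ω halt, ((hmemW' _).mp (f' i).2).2, neg_zero]
        | succ j =>
          simpa [hω'app] using hf2 i j
    · intro i j
      induction j using Fin.cases with
      | zero => simpa using hbf0 i
      | succ j =>
        induction i using Fin.cases with
        | zero =>
          simp only [Fin.cases_zero, Fin.cases_succ]
          rw [((hmemW' _).mp (f' j).2).1, if_neg (Ne.symm (Fin.succ_ne_zero j))]
        | succ i =>
          simp only [Fin.cases_succ]
          rw [show ω (b i.succ) ((f' j : W)) = ω' (b' i) (f' j) from rfl, hf3 i j]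
          simp [Fin.succ_inj]

/-- Let `(W, ω)` be a `2n`-dimensional complex symplectic space, `J` a diagonalizable
infinitesimal symplectomorphism, and `L ⊆ W` a `J`-invariant Lagrangian subspace on which `J` has
an eigenbasis `b` with eigenvalues `ν₁, ..., ν_n`.  Then there is a `J`-invariant Lagrangian
complement `V` of `L` spanned by eigenvectors `f i` with eigenvalues `−ν i`; in particular the
`b i` together with the `f i` form an eigenbasis of `W`, so the spectrum of `J` on `W` (with
multiplicity) is `{ν₁, ..., ν_n, −ν₁, ..., −ν_n}`. -/
theorem stmt7 {W : Type*} [AddCommGroup W] [Module ℂ W] [FiniteDimensional ℂ W]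
    {n : ℕ} (hW : Module.finrank ℂ W = 2 * n)
    (ω : LinearMap.BilinForm ℂ W)
    (halt : ∀ u : W, ω u u = 0) (hnondeg : ω.Nondegenerate)
    (J : Module.End ℂ W)
    (hskew : ∀ u v : W, ω (J u) v + ω u (J v) = 0)
    (hdiag : ⨆ μ : ℂ, J.eigenspace μ = ⊤)
    (L : Submodule ℂ W) (hLiso : ∀ u ∈ L, ∀ v ∈ L, ω u v = 0)
    (hLdim : Module.finrank ℂ L = n)
    (ν : Fin n → ℂ) (b : Basis (Fin n) ℂ L)
    (hb : ∀ i, J (b i : W) = ν i • (b i : W)) :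
    ∃ f : Fin n → W,
      (∀ i, J (f i) = (-ν i) • f i) ∧
      (∀ i j, ω (f i) (f j) = 0) ∧
      IsCompl L (Submodule.span ℂ (Set.range f)) ∧
      ∃ B : Basis (Fin n ⊕ Fin n) ℂ W,
        (∀ i, B (Sum.inl i) = (b i : W)) ∧ (∀ i, B (Sum.inr i) = f i) := by
  classical
  have hbW : LinearIndependent ℂ (fun i => (b i : W)) :=
    b.linearIndependent.map' L.subtype L.ker_subtype
  obtain ⟨f, hf1, hf2, hf3⟩ := key n ω halt hnondeg J hskew hdiag ν (fun i => (b i : W))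
    hbW hb (fun i j => hLiso _ (b i).2 _ (b j).2)
  set g : Fin n ⊕ Fin n → W := Sum.elim (fun i => (b i : W)) f with hg
  have hgind : LinearIndependent ℂ g := by
    rw [Fintype.linearIndependent_iff]
    intro c hc
    rw [Fintype.sum_sum_type] at hc
    have hsum : ∑ i, c (Sum.inl i) • (b i : W) + ∑ i, c (Sum.inr i) • f i = 0 := by
      simpa [hg] using hc
    have hc2 : ∀ k, c (Sum.inr k) = 0 := by
      intro k
      have h := congrArg (fun w => ω (b k : W) w) hsum
      simp only [map_add, map_sum, map_smul, smul_eq_mul, map_zero] at h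
      have e1 : ∀ i : Fin n, ω ((b k : W)) ((b i : W)) = 0 :=
        fun i => hLiso _ (b k).2 _ (b i).2
      simp only [e1, mul_zero, Finset.sum_const_zero, zero_add, hf3, mul_ite,
        mul_one] at h
      simpa [Finset.sum_ite_eq] using h
    have hsum2 : ∑ i, c (Sum.inl i) • (b i : W) = 0 := by
      have hz : ∀ i : Fin n, c (Sum.inr i) • f i = 0 := fun i => by
        rw [hc2, zero_smul]
      rwa [Finset.sum_congr rfl (fun i _ => hz i), Finset.sum_const_zero,
        add_zero] at hsum
    have hc1 : ∀ k, c (Sum.inl k) = 0 :=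
      Fintype.linearIndependent_iff.mp hbW _ hsum2
    intro k
    cases k with
    | inl k => exact hc1 k
    | inr k => exact hc2 k
  have hcard : Fintype.card (Fin n ⊕ Fin n) = Module.finrank ℂ W := by
    rw [hW, Fintype.card_sum, Fintype.card_fin, two_mul]
  have hspan : ⊤ ≤ Submodule.span ℂ (Set.range g) :=
    (Submodule.eq_top_of_finrank_eq (S := Submodule.span ℂ (Set.range g))
      (by rw [finrank_span_eq_card hgind, hcard])).ge
  let B : Basis (Fin n ⊕ Fin n) ℂ W := Basis.mk hgind hspan
  have hB : ∀ k, B k = g k := fun k => Basis.mk_apply hgind hspan k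
  have hLspan : L = Submodule.span ℂ (Set.range fun i => (b i : W)) := by
    calc L = Submodule.map L.subtype ⊤ := (Submodule.map_subtype_top L).symm
    _ = Submodule.map L.subtype (Submodule.span ℂ (Set.range ⇑b)) := by rw [b.span_eq]
    _ = Submodule.span ℂ (L.subtype '' Set.range ⇑b) := Submodule.map_span _ _
    _ = Submodule.span ℂ (Set.range fun i => (b i : W)) := by rw [← Set.range_comp]; rfl
  have e1 : (Set.range fun i => (b i : W)) = g '' Set.range Sum.inl := by
    rw [← Set.range_comp]; rfl
  have e2 : Set.range f = g '' Set.range Sum.inr := by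
    rw [← Set.range_comp]; rfl
  have hdisj : Disjoint L (Submodule.span ℂ (Set.range f)) := by
    rw [hLspan, e1, e2]
    exact hgind.disjoint_span_image Set.isCompl_range_inl_range_inr.disjoint
  have hcodis : L ⊔ Submodule.span ℂ (Set.range f) = ⊤ := by
    rw [hLspan, ← Submodule.span_union, ← Set.Sum.elim_range]
    have hrange : Set.range g = Set.range ⇑B := by
      rw [show ⇑B = g from Basis.coe_mk hgind hspan]
    rw [show Sum.elim (fun i => (b i : W)) f = g from rfl, hrange]
    exact B.span_eq
  exact ⟨f, hf1, hf2, ⟨hdisj, codisjoint_iff.mpr hcodis⟩, B,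
    fun i => hB (Sum.inl i), fun i => hB (Sum.inr i)⟩
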